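/- Let A be a von Neumann algebra, let N be a Hilbert A-module and let M be a closed A-submodule of N with M⊥ = {0} in N. Then the annihilators in A of the inner-product ideals of M and of N coincide: {a ∈ A : a·⟨x,y⟩ = 0 for all x, y ∈ M} = {a ∈ A : a·⟨x,y⟩ = 0 for all x, y ∈ N}; moreover there exists a projection p in the center of A such that this common annihilator equals (1 − p)·A. -/

import Mathlib

open scoped RightActions

universe u

/-- A C⋆-algebra is a von Neumann algebra if it is ⋆-isomorphic to a concrete
von Neumann algebra (in the sense of Mathlib's `VonNeumannAlgebra`) acting on
some complex Hilbert space. -/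
def IsVonNeumannAlgebra (A : Type u) [CStarAlgebra A] : Prop :=
  ∃ (H : Type u) (_ : NormedAddCommGroup H) (_ : InnerProductSpace ℂ H) (_ : CompleteSpace H)
    (W : VonNeumannAlgebra H), Nonempty (A ≃⋆ₐ[ℂ] W.toStarSubalgebra)

section Aux

variable {H : Type u} [NormedAddCommGroup H] [InnerProductSpace ℂ H] [CompleteSpace H]

open ContinuousLinearMap in
/-- If a closed subspace is invariant under `T` and `star T`, then the orthogonal
projection onto it commutes with `T`. -/
lemma proj_comm_aux (K : Submodule ℂ H) [CompleteSpace K] (T : H →L[ℂ] H)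
    (hT : ∀ ξ ∈ K, T ξ ∈ K) (hT' : ∀ ξ ∈ K, star T ξ ∈ K) :
    (K.subtypeL ∘L K.orthogonalProjectionOnto) * T = T * (K.subtypeL ∘L K.orthogonalProjectionOnto) := by
  set P := K.subtypeL ∘L K.orthogonalProjectionOnto with hPdef
  have hsa : IsSelfAdjoint P := isSelfAdjoint_starProjection K
  have hfix : ∀ ξ ∈ K, P ξ = ξ := fun ξ h => Submodule.starProjection_eq_self_iff.2 h
  have hmem : ∀ ξ, P ξ ∈ K := fun ξ => (K.orthogonalProjectionOnto ξ).2
  have h1 : P * T * P = T * P := by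
    ext ξ
    simp only [mul_apply_eq_comp]
    exact hfix _ (hT _ (hmem ξ))
  have h2 : P * star T * P = star T * P := by
    ext ξ
    simp only [mul_apply_eq_comp]
    exact hfix _ (hT' _ (hmem ξ))
  have h3 : P * T = P * (T * P) := by
    have := congrArg star h2
    simpa [star_mul, mul_assoc, hsa.star_eq] using this.symm
  rw [h3, ← mul_assoc, h1]

open ContinuousLinearMap in
/-- The key concrete fact: in a von Neumann algebra `W` on a Hilbert space, the left
annihilator of a star-closed set `S ⊆ W` which is closed under right multiplication by `W`
is determined by a central projection `q`. -/
lemma exists_central_proj (W : VonNeumannAlgebra H) (S : Set (H →L[ℂ] H))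
    (hSW : ∀ s ∈ S, s ∈ W)
    (hstar : ∀ s ∈ S, star s ∈ S)
    (hmul : ∀ s ∈ S, ∀ w ∈ W, s * w ∈ S) :
    ∃ q : H →L[ℂ] H, q ∈ W ∧ IsSelfAdjoint q ∧ IsIdempotentElem q ∧
      (∀ w ∈ W, q * w = w * q) ∧ (∀ s ∈ S, s * q = 0) ∧
      (∀ a : H →L[ℂ] H, (∀ s ∈ S, a * s = 0) → a * q = a) := by
  classical
  set K : Submodule ℂ H := ⨅ s : S, LinearMap.ker ((s : H →L[ℂ] H) : H →ₗ[ℂ] H) with hKdef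
  have hKmem : ∀ ξ : H, ξ ∈ K ↔ ∀ s ∈ S, s ξ = 0 := by
    intro ξ
    rw [hKdef, Submodule.mem_iInf]
    constructor
    · intro h s hs
      exact h ⟨s, hs⟩
    · intro h s
      exact h s.1 s.2
  have hKclosed : IsClosed (K : Set H) := by
    rw [hKdef, Submodule.coe_iInf]
    exact isClosed_iInter fun s => ContinuousLinearMap.isClosed_ker (s : H →L[ℂ] H)
  haveI : CompleteSpace K := hKclosed.completeSpace_coe
  set P : H →L[ℂ] H := K.subtypeL ∘L K.orthogonalProjectionOnto with hPdef
  have hsa : IsSelfAdjoint P := isSelfAdjoint_starProjection K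
  have hfix : ∀ ξ ∈ K, P ξ = ξ := fun ξ h => Submodule.starProjection_eq_self_iff.2 h
  have hmemK : ∀ ξ, P ξ ∈ K := fun ξ => (K.orthogonalProjectionOnto ξ).2
  have hidem : IsIdempotentElem P := by
    show P * P = P
    ext ξ
    simp only [mul_apply_eq_comp]
    exact hfix _ (hmemK ξ)
  have hSP : ∀ s ∈ S, s * P = 0 := by
    intro s hs
    ext ξ
    simp only [mul_apply, zero_apply]
    exact (hKmem (P ξ)).1 (hmemK ξ) s hs
  have hcomm : ∀ w ∈ W, P * w = w * P := by
    intro w hw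
    refine proj_comm_aux K w ?_ ?_
    · intro ξ hξ
      rw [hKmem]
      intro s hs
      have : (s * w) ξ = 0 := (hKmem ξ).1 hξ _ (hmul s hs w hw)
      simpa [mul_apply] using this
    · intro ξ hξ
      rw [hKmem]
      intro s hs
      have : (s * star w) ξ = 0 := (hKmem ξ).1 hξ _ (hmul s hs (star w) (star_mem hw))
      simpa [mul_apply] using this
  have hann : ∀ a : H →L[ℂ] H, (∀ s ∈ S, a * s = 0) → a * P = a := by
    intro a ha
    have ha' : ∀ s ∈ S, s * star a = 0 := by
      intro s hs
      have := congrArg star (ha (star s) (hstar s hs))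
      simpa [star_mul] using this
    have hrange : ∀ ξ, star a ξ ∈ K := by
      intro ξ
      rw [hKmem]
      intro s hs
      have : (s * star a) ξ = 0 := by rw [ha' s hs]; rfl
      simpa [mul_apply] using this
    have h1 : P * star a = star a := by
      ext ξ
      simp only [mul_apply_eq_comp]
      exact hfix _ (hrange ξ)
    have := congrArg star h1
    simpa [star_mul, hsa.star_eq] using this
  have hPW : P ∈ W := by
    have : P ∈ Set.centralizer (Set.centralizer (W : Set (H →L[ℂ] H))) := by
      rw [Set.mem_centralizer_iff]
      intro u hu
      have hu' : ∀ w ∈ W, w * u = u * w := fun w hw => hu w hw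
      have hu'' : ∀ w ∈ W, w * star u = star u * w := by
        intro w hw
        have := congrArg star (hu' (star w) (star_mem hw))
        simp only [star_mul, star_star] at this
        exact this.symm
      have h := proj_comm_aux K u ?_ ?_
      · exact h.symm
      · intro ξ hξ
        rw [hKmem]
        intro s hs
        have h1 : s * u = u * s := (hu' s (hSW s hs))
        have : (s * u) ξ = 0 := by
          rw [h1]
          simp only [mul_apply_eq_comp]
          rw [(hKmem ξ).1 hξ s hs, map_zero]
        simpa [mul_apply] using this
      · intro ξ hξ
        rw [hKmem]
        intro s hs
        have h1 : s * star u = star u * s := hu'' s (hSW s hs)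
        have : (s * star u) ξ = 0 := by
          rw [h1]
          simp only [mul_apply_eq_comp]
          rw [(hKmem ξ).1 hξ s hs, map_zero]
        simpa [mul_apply] using this
    rw [W.centralizer_centralizer] at this
    exact this
  exact ⟨P, hPW, hsa, hidem, hcomm, hSP, hann⟩

end Aux

/-- The December 2024 Mathlib notion of a Hilbert C⋆-module (right module, via `Aᵐᵒᵖ`),
reproduced verbatim under a new name since Mathlib's `CStarModule` is now a left module. -/
class RightCStarModule (A E : Type*) [NonUnitalSemiring A] [StarRing A]
    [Module ℂ A] [AddCommGroup E] [Module ℂ E] [PartialOrder A] [SMul Aᵐᵒᵖ E] [Norm A] [Norm E]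
    extends Inner A E where
  inner_add_right {x} {y} {z} : inner x (y + z) = inner x y + inner x z
  inner_self_nonneg {x} : 0 ≤ inner x x
  inner_self {x} : inner x x = 0 ↔ x = 0
  inner_op_smul_right {a : A} {x y : E} : inner x (y <• a) = inner x y * a
  inner_smul_right_complex {z : ℂ} {x} {y} : inner x (z • y) = z • inner x y
  star_inner x y : star (inner x y) = inner y x
  norm_eq_sqrt_norm_inner_self x : ‖x‖ = √‖inner x x‖

lemma RightCStarModule.inner_op_smul_left {A E : Type*} [NonUnitalSemiring A] [StarRing A]
    [Module ℂ A] [AddCommGroup E] [Module ℂ E] [PartialOrder A] [SMul Aᵐᵒᵖ E] [Norm A] [Norm E]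
    [RightCStarModule A E] {a : A} {x y : E} :
    inner (𝕜 := A) (x <• a) y = star a * inner (𝕜 := A) x y := by
  rw [← RightCStarModule.star_inner y, RightCStarModule.inner_op_smul_right, star_mul,
    RightCStarModule.star_inner]

@[simp]
lemma RightCStarModule.inner_zero_right {A E : Type*} [NonUnitalSemiring A] [StarRing A]
    [Module ℂ A] [AddCommGroup E] [Module ℂ E] [PartialOrder A] [SMul Aᵐᵒᵖ E] [Norm A] [Norm E]
    [RightCStarModule A E] {x : E} : inner (𝕜 := A) x (0 : E) = 0 := by
  have h := RightCStarModule.inner_smul_right_complex (A := A) (E := E) (z := 0) (x := x) (y := 0)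
  simp only [zero_smul] at h
  exact h

@[simp]
lemma RightCStarModule.inner_zero_left {A E : Type*} [NonUnitalSemiring A] [StarRing A]
    [Module ℂ A] [AddCommGroup E] [Module ℂ E] [PartialOrder A] [SMul Aᵐᵒᵖ E] [Norm A] [Norm E]
    [RightCStarModule A E] {y : E} : inner (𝕜 := A) (0 : E) y = 0 := by
  rw [← RightCStarModule.star_inner, RightCStarModule.inner_zero_right, star_zero]

/-- Let `A` be a von Neumann algebra, `N` a Hilbert `A`-module and `M` a closed
`A`-submodule with `M⊥ = {0}` in `N`.  Then the annihilators in `A` of the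
inner-product ideals of `M` and of `N` coincide, and there is a projection `p` in the
center of `A` such that this common annihilator equals `(1 - p)·A`. -/
theorem annihilators_of_inner_ideals_coincide
    {A : Type u} [CStarAlgebra A] [PartialOrder A] [StarOrderedRing A]
    (hA : IsVonNeumannAlgebra A)
    {N : Type*} [NormedAddCommGroup N] [NormedSpace ℂ N] [SMul Aᵐᵒᵖ N] [RightCStarModule A N]
    [CompleteSpace N]
    -- `M` is a closed `A`-submodule of `N`
    (M : Submodule ℂ N) (hMclosed : IsClosed (M : Set N))
    (hMsmul : ∀ (a : A), ∀ m ∈ M, m <• a ∈ M)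
    -- `M⊥ = {0}` in `N`
    (hMbot : ∀ n : N, (∀ m ∈ M, inner (𝕜 := A) m n = 0) → n = 0) :
    {a : A | ∀ x ∈ M, ∀ y ∈ M, a * inner (𝕜 := A) x y = 0}
      = {a : A | ∀ x y : N, a * inner (𝕜 := A) x y = 0} ∧
    ∃ p : A, IsSelfAdjoint p ∧ IsIdempotentElem p ∧ p ∈ Set.center A ∧
      {a : A | ∀ x y : N, a * inner (𝕜 := A) x y = 0} = {b : A | ∃ a : A, b = (1 - p) * a} := by
  obtain ⟨H, _, _, _, W, ⟨φ⟩⟩ := hA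
  set T : A → (H →L[ℂ] H) := fun a => ((φ a : W.toStarSubalgebra) : H →L[ℂ] H) with hTdef
  have hTmul : ∀ a b : A, T (a * b) = T a * T b := by
    intro a b; exact congrArg Subtype.val (map_mul φ a b)
  have hTstar : ∀ a : A, T (star a) = star (T a) := by
    intro a; exact congrArg Subtype.val (map_star φ a)
  have hT0 : T 0 = 0 := congrArg Subtype.val (map_zero φ)
  have hTinj : Function.Injective T := by
    intro a b h
    exact φ.injective (Subtype.ext h)
  have hTmem : ∀ a : A, T a ∈ W := fun a => (φ a).2
  have hTsurj : ∀ w ∈ W, ∃ a : A, T a = w := by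
    intro w hw
    exact ⟨φ.symm ⟨w, hw⟩, congrArg Subtype.val (φ.apply_symm_apply ⟨w, hw⟩)⟩
  -- the set of inner products from `M`, pushed into `B(H)`
  set I : Set A := {a : A | ∃ x ∈ M, ∃ y ∈ M, inner (𝕜 := A) x y = a} with hIdef
  set S : Set (H →L[ℂ] H) := T '' I with hSdef
  obtain ⟨q, hqW, hqsa, hqidem, hqcomm, hqS, hqann⟩ :=
    exists_central_proj W S
      (by rintro s ⟨a, -, rfl⟩; exact hTmem a)
      (by
        rintro s ⟨a, ⟨x, hx, y, hy, rfl⟩, rfl⟩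
        refine ⟨inner (𝕜 := A) y x, ⟨y, hy, x, hx, rfl⟩, ?_⟩
        rw [← hTstar, RightCStarModule.star_inner])
      (by
        rintro s ⟨a, ⟨x, hx, y, hy, rfl⟩, rfl⟩ w hw
        obtain ⟨b, rfl⟩ := hTsurj w hw
        refine ⟨inner (𝕜 := A) x (y <• b), ⟨x, hx, y <• b, hMsmul b y hy, rfl⟩, ?_⟩
        rw [← hTmul, RightCStarModule.inner_op_smul_right])
  -- pull the projection back to `A`
  set z : A := φ.symm ⟨q, hqW⟩ with hzdef
  have hTz : T z = q := congrArg Subtype.val (φ.apply_symm_apply ⟨q, hqW⟩)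
  have hzsa : IsSelfAdjoint z := by
    apply hTinj
    rw [hTstar, hTz, hqsa.star_eq]
  have hzidem : IsIdempotentElem z := by
    apply hTinj
    rw [hTmul, hTz, hqidem]
  have hzcomm : ∀ g : A, g * z = z * g := by
    intro g
    apply hTinj
    rw [hTmul, hTmul, hTz, hqcomm (T g) (hTmem g)]
  -- `z` annihilates inner products from `M` on both sides
  have hz1 : ∀ x ∈ M, ∀ y ∈ M, inner (𝕜 := A) x y * z = 0 := by
    intro x hx y hy
    apply hTinj
    rw [hTmul, hTz, hT0]
    exact hqS _ ⟨_, ⟨x, hx, y, hy, rfl⟩, rfl⟩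
  -- every element of `M`, and then of `N`, is killed by `z` on the right
  have hm0 : ∀ m ∈ M, m <• z = 0 := by
    intro m hm
    apply hMbot
    intro m' hm'
    rw [RightCStarModule.inner_op_smul_right]
    exact hz1 m' hm' m hm
  have hn0 : ∀ n : N, n <• z = 0 := by
    intro n
    apply hMbot
    intro m hm
    have h1 : star z * inner (𝕜 := A) m n = 0 := by
      have := RightCStarModule.inner_op_smul_left (A := A) (E := N) (a := z) (x := m) (y := n)
      rw [hm0 m hm] at this
      simpa using this.symm
    rw [RightCStarModule.inner_op_smul_right]
    rw [hzsa.star_eq] at h1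
    rw [hzcomm]
    exact h1
  -- hence `z` annihilates all inner products of `N`
  have hzN : ∀ x y : N, z * inner (𝕜 := A) x y = 0 := by
    intro x y
    have := RightCStarModule.inner_op_smul_left (A := A) (E := N) (a := z) (x := x) (y := y)
    rw [hn0 x, hzsa.star_eq] at this
    simpa using this.symm
  -- annihilation over `M` forces `a * z = a`
  have key : ∀ a : A, (∀ x ∈ M, ∀ y ∈ M, a * inner (𝕜 := A) x y = 0) → a * z = a := by
    intro a ha
    apply hTinj
    rw [hTmul, hTz]
    apply hqann
    rintro s ⟨c, ⟨x, hx, y, hy, rfl⟩, rfl⟩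
    rw [← hTmul, ha x hx y hy, hT0]
  constructor
  · ext a
    simp only [Set.mem_setOf_eq]
    constructor
    · intro ha x y
      have haz : a * z = a := key a ha
      calc a * inner (𝕜 := A) x y = a * z * inner (𝕜 := A) x y := by rw [haz]
        _ = a * (z * inner (𝕜 := A) x y) := by rw [mul_assoc]
        _ = 0 := by rw [hzN x y, mul_zero]
    · intro ha x _ y _
      exact ha x y
  · refine ⟨1 - z, (IsSelfAdjoint.one A).sub hzsa, hzidem.one_sub, ?_, ?_⟩
    · rw [Semigroup.mem_center_iff]
      intro g
      rw [mul_sub, sub_mul, mul_one, one_mul, hzcomm g]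
    · ext b
      simp only [Set.mem_setOf_eq, sub_sub_cancel]
      constructor
      · intro hb
        have hbz : b * z = b := key b (fun x _ y _ => hb x y)
        exact ⟨b, by rw [← hzcomm, hbz]⟩
      · rintro ⟨a, rfl⟩
        intro x y
        rw [← hzcomm a, mul_assoc, hzN x y, mul_zero]
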